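/- The minimal total dissipation for erasing N independent qubits with only local (non-interacting) control is N times the single-qubit minimum: since the single-qubit Hellinger angle from the uniform distribution (1/2,1/2) to the point mass (1,0) is 2 arccos(1/√2) = π/2, the minimal local dissipated work is β W*_local = N·(π/2)²/τ = Nπ²/(4τ). In particular the ratio of the local minimum Nπ²/(4τ) to the global full-control minimum (2 arccos 2^{-N/2})²/τ grows like N/4 as N → ∞. -/

import Mathlib

open Real Filter

lemma aux_angle : 2 * Real.arccos (Real.sqrt (1/2 * 1) + Real.sqrt (1/2 * 0)) = π / 2 := by
  have h : Real.sqrt (1/2 * 1) + Real.sqrt (1/2 * 0) = Real.cos (π/4) := by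
    rw [mul_one, mul_zero, Real.sqrt_zero, add_zero, Real.cos_pi_div_four,
      show (1/2 : ℝ) = (Real.sqrt 2 / 2)^2 by
        nlinarith [Real.sq_sqrt (by norm_num : (2:ℝ) ≥ 0)]]
    exact Real.sqrt_sq (by positivity)
  rw [h, Real.arccos_cos (by positivity) (by linarith [Real.pi_pos])]
  ring

/-- **Local (non-interacting) erasure dissipation and the collective advantage.**
The single-qubit Hellinger angle from the uniform distribution `(1/2,1/2)` to the
point mass `(1,0)` is `2 arccos(1/√2) = π/2`; hence the minimal local dissipated
work for `N` independent qubits is `N·(π/2)²/τ = Nπ²/(4τ)`.  Moreover, the ratio of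
this local minimum to the global full-control minimum `(2 arccos 2^{-N/2})²/τ`
grows like `N/4`: dividing the ratio by `N` converges to `1/4`. -/
theorem local_erasure_dissipation_and_collective_ratio
    (τ : ℝ) (hτ : 0 < τ) :
    2 * Real.arccos (Real.sqrt (1/2 * 1) + Real.sqrt (1/2 * 0)) = π / 2 ∧
    (∀ N : ℕ, (N : ℝ) * (2 * Real.arccos (Real.sqrt (1/2 * 1) + Real.sqrt (1/2 * 0))) ^ 2 / τ
      = (N : ℝ) * π ^ 2 / (4 * τ)) ∧
    Tendsto (fun N : ℕ =>
        (((N : ℝ) * π ^ 2 / (4 * τ)) /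
          ((2 * Real.arccos ((2:ℝ) ^ (-(N:ℝ)/2))) ^ 2 / τ)) / (N : ℝ))
      atTop (nhds (1/4)) := by
  refine ⟨aux_angle, fun N => by rw [aux_angle]; ring, ?_⟩
  -- the argument 2^(-N/2) tends to 0
  have harg : Tendsto (fun N : ℕ => (2:ℝ) ^ (-(N:ℝ)/2)) atTop (nhds 0) := by
    apply (tendsto_rpow_atBot_of_base_gt_one 2 one_lt_two).comp
    have : Tendsto (fun N : ℕ => -(N:ℝ)/2) atTop atBot := by
      simp only [neg_div]
      exact tendsto_neg_atTop_atBot.comp (tendsto_natCast_atTop_atTop.atTop_div_const two_pos)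
    exact this
  have hA : Tendsto (fun N : ℕ => 2 * Real.arccos ((2:ℝ) ^ (-(N:ℝ)/2))) atTop (nhds π) := by
    have := (Real.continuous_arccos.tendsto 0).comp harg
    rw [Real.arccos_zero] at this
    have h2 := this.const_mul 2
    simpa [mul_div_cancel₀] using h2
  have hmain : Tendsto (fun N : ℕ => π ^ 2 / (4 * (2 * Real.arccos ((2:ℝ) ^ (-(N:ℝ)/2))) ^ 2))
      atTop (nhds (1/4)) := by
    have hd : Tendsto (fun N : ℕ => 4 * (2 * Real.arccos ((2:ℝ) ^ (-(N:ℝ)/2))) ^ 2)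
        atTop (nhds (4 * π ^ 2)) := (hA.pow 2).const_mul 4
    have := (tendsto_const_nhds (x := π ^ 2) (f := atTop)).div hd
      (by positivity : (4:ℝ) * π ^ 2 ≠ 0)
    convert this using 2
    · rfl
    · rw [mul_comm, ← div_div, div_self (by positivity)]
  refine hmain.congr' ?_
  filter_upwards [eventually_ge_atTop 1] with N hN
  have hNpos : (0:ℝ) < N := by exact_mod_cast hN
  have hlt : (2:ℝ) ^ (-(N:ℝ)/2) < 1 := by
    apply Real.rpow_lt_one_of_one_lt_of_neg one_lt_two
    have : (0:ℝ) < (N:ℝ)/2 := by positivity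
    linarith
  have hAN : 0 < 2 * Real.arccos ((2:ℝ) ^ (-(N:ℝ)/2)) := by
    have := Real.arccos_pos.mpr hlt
    linarith
  field_simp
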